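/- Let K ⊆ G be compact, where G acts continuously on a compact metric space X. Then the map κ_K : X → ℝ≥0, x ↦ sup_{y ∈ X} d(y, K·x), measuring how far the partial orbit K·x is from being ε-dense, is continuous. -/

import Mathlib

open Metric Set

theorem continuous_denseness_of_partial_orbit
    {G X : Type*} [Group G] [TopologicalSpace G] [IsTopologicalGroup G]
    [MetricSpace X] [CompactSpace X] [MulAction G X] [ContinuousSMul G X]
    (K : Set G) (hK : IsCompact K) :
    Continuous fun x : X => ⨆ y : X, Metric.infDist y ((fun k : G => k • x) '' K) := by
  rcases isEmpty_or_nonempty X with hX | hX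
  · exact continuous_of_discreteTopology
  rcases K.eq_empty_or_nonempty with rfl | hKne
  · simp only [image_empty, Metric.infDist_empty]
    exact continuous_const
  obtain ⟨k₀, hk₀⟩ := hKne
  set S : X → Set X := fun x => (fun k : G => k • x) '' K with hS
  have hSne : ∀ x, (S x).Nonempty := fun x => ⟨k₀ • x, k₀, hk₀, rfl⟩
  have hbdd : ∀ x : X, BddAbove (range fun y => infDist y (S x)) := by
    intro x
    refine ⟨Metric.diam (univ : Set X), ?_⟩
    rintro r ⟨y, rfl⟩
    calc infDist y (S x) ≤ dist y (k₀ • x) := infDist_le_dist_of_mem ⟨k₀, hk₀, rfl⟩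
      _ ≤ Metric.diam (univ : Set X) :=
        Metric.dist_le_diam_of_mem isCompact_univ.isBounded (mem_univ _) (mem_univ _)
  have key : ∀ (x x' : X) (ε : ℝ), (∀ k ∈ K, dist (k • x) (k • x') ≤ ε) →
      (⨆ y : X, infDist y (S x)) ≤ (⨆ y : X, infDist y (S x')) + ε := by
    intro x x' ε h
    have hε : 0 ≤ ε := le_trans dist_nonneg (h k₀ hk₀)
    refine Real.iSup_le (fun y => ?_)
      (add_nonneg (Real.iSup_nonneg fun _ => infDist_nonneg) hε)
    have h1 : infDist y (S x) ≤ infDist y (S x') + ε := by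
      rw [← sub_le_iff_le_add]
      conv_rhs => rw [infDist_eq_iInf]
      haveI := (hSne x').to_subtype
      refine le_ciInf fun z => ?_
      obtain ⟨k, hk, hkz⟩ := z.2
      have h2 : infDist y (S x) ≤ dist y (k • x) := infDist_le_dist_of_mem ⟨k, hk, rfl⟩
      have h3 : dist y (k • x) ≤ dist y (z : X) + dist (k • x) (k • x') := by
        have := dist_triangle y (z : X) (k • x)
        rw [← hkz] at this ⊢
        simpa [dist_comm] using this
      have h4 := h k hk
      linarith
    calc infDist y (S x) ≤ infDist y (S x') + ε := h1
      _ ≤ (⨆ y : X, infDist y (S x')) + ε := by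
          gcongr
          exact le_ciSup (hbdd x') y
  rw [continuous_iff_continuousAt]
  intro x₀
  rw [ContinuousAt, Metric.tendsto_nhds]
  intro ε hε
  have hcont : Continuous fun p : G × X => dist (p.1 • p.2) (p.1 • x₀) := by
    fun_prop
  set A : Set (G × X) := {p | dist (p.1 • p.2) (p.1 • x₀) < ε / 2} with hA
  have hAopen : IsOpen A := isOpen_lt hcont continuous_const
  have hsub : K ×ˢ ({x₀} : Set X) ⊆ A := by
    rintro ⟨k, x⟩ ⟨hk, hx⟩
    rcases mem_singleton_iff.1 hx with rfl
    simp only [A, mem_setOf_eq, dist_self]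
    positivity
  obtain ⟨u, v, hu, hv, hKu, hx₀v, huv⟩ :=
    generalized_tube_lemma hK isCompact_singleton hAopen hsub
  have hv' : v ∈ nhds x₀ := hv.mem_nhds (hx₀v rfl)
  filter_upwards [hv'] with x hx
  have hd : ∀ k ∈ K, dist (k • x) (k • x₀) ≤ ε / 2 := by
    intro k hk
    have := huv (show (k, x) ∈ u ×ˢ v from ⟨hKu hk, hx⟩)
    simp only [A, mem_setOf_eq] at this
    exact le_of_lt this
  have h1 := key x x₀ (ε / 2) hd
  have h2 := key x₀ x (ε / 2) (fun k hk => by rw [dist_comm]; exact hd k hk)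
  rw [Real.dist_eq, abs_sub_lt_iff]
  constructor <;> linarith
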